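/- Bromwich inversion formula for the expected shortfall: let X be a real random variable with law having density f ≥ 0 with respect to Lebesgue measure, let a > 0, and define M(t) = ∫_ℝ e^{tx} f(x) dx for complex t with Re(t) = a, assuming ∫_ℝ e^{ax} f(x) dx < ∞. Assume that s ↦ M(a + is) is Lebesgue integrable on ℝ and that the inversion formula f(u) = (1/(2π))·∫_ℝ M(a + is)·e^{−(a+is)u} ds holds for all u ∈ ℝ. Then for every x ∈ ℝ, ∫_x^∞ u·f(u) du = x·P(X > x) + (1/(2π))·∫_ℝ M(a + is)·e^{−(a+is)x}/(a + is)² ds; consequently, if P(X > x) > 0, the conditional expectation satisfies E[X | X > x] = x + (1/P(X > x))·(1/(2π))·∫_ℝ M(a + is)·e^{−(a+is)x}/(a + is)² ds. -/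

import Mathlib

open MeasureTheory Set Filter

lemma bromwich_tendsto_mul_exp {c : ℝ} (hc : 0 < c) :
    Tendsto (fun u : ℝ => u * Real.exp (-(c * u))) atTop (nhds 0) := by
  have h := (Real.tendsto_pow_mul_exp_neg_atTop_nhds_zero 1).comp
    (tendsto_id.const_mul_atTop hc)
  have h2 := h.const_mul c⁻¹
  rw [mul_zero] at h2
  refine h2.congr fun u => ?_
  simp only [Function.comp_apply, pow_one, id]
  field_simp

lemma bromwich_integrable_aux {a : ℝ} (ha : 0 < a) (x : ℝ) :
    IntegrableOn (fun u : ℝ => (u - x) * Real.exp (-(a * u))) (Ioi x) := by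
  apply integrable_of_isBigO_exp_neg (b := a / 2) (by linarith)
  · fun_prop
  · rw [Asymptotics.isBigO_iff]
    refine ⟨1, ?_⟩
    have h1 : Tendsto (fun u : ℝ => (u - x) * Real.exp (-(a / 2 * u))) atTop (nhds 0) := by
      have := (bromwich_tendsto_mul_exp (by linarith : (0:ℝ) < a / 2)).sub
        ((Real.tendsto_exp_atBot.comp
          (tendsto_id.const_mul_atTop_of_neg (by linarith : -(a/2) < 0))).const_mul x)
      rw [mul_zero, sub_zero] at this
      refine this.congr fun u => ?_
      simp only [Function.comp_apply, id]
      rw [neg_mul]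
      ring
    have h2 := h1.eventually_le_const (by norm_num : (0:ℝ) < 1)
    filter_upwards [h2, eventually_ge_atTop x] with u hu hux
    have he : Real.exp (-(a * u)) = Real.exp (-(a/2 * u)) * Real.exp (-(a/2*u)) := by
      rw [← Real.exp_add]; ring_nf
    rw [Real.norm_eq_abs, Real.norm_eq_abs, abs_of_nonneg (Real.exp_pos _).le, he,
      abs_of_nonneg (mul_nonneg (by linarith) (by positivity))]
    calc (u - x) * (Real.exp (-(a/2*u)) * Real.exp (-(a/2*u)))
        = ((u - x) * Real.exp (-(a/2*u))) * Real.exp (-(a/2*u)) := by ring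
      _ ≤ 1 * Real.exp (-(a/2*u)) := by
          apply mul_le_mul_of_nonneg_right hu (Real.exp_pos _).le
      _ = 1 * Real.exp (-(a/2) * u) := by rw [neg_mul]

lemma bromwich_norm_exp (t : ℂ) (u : ℝ) :
    ‖Complex.exp (-t * u)‖ = Real.exp (-(t.re * u)) := by
  rw [Complex.norm_exp]
  congr 1
  simp [Complex.mul_re]

lemma bromwich_inner_int {t : ℂ} (ht : 0 < t.re) (x : ℝ) :
    ∫ u in Ioi x, ((u : ℂ) - x) * Complex.exp (-t * u)
      = Complex.exp (-t * x) / t ^ 2 := by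
  have htne : t ≠ 0 := fun h => by simp [h] at ht
  set F : ℝ → ℂ := fun u => -Complex.exp (-t * u) * (((u : ℂ) - x) / t + 1 / t ^ 2) with hF
  have hexp : ∀ w : ℂ, HasDerivAt (fun w : ℂ => Complex.exp (-t * w))
      (-t * Complex.exp (-t * w)) w := by
    intro w
    have := (Complex.hasDerivAt_exp (-t * w)).comp w ((hasDerivAt_id w).const_mul (-t))
    simpa [Function.comp_def, mul_comm] using this
  have hderiv : ∀ u : ℝ, HasDerivAt F (((u : ℂ) - x) * Complex.exp (-t * u)) u := by
    intro u
    have hg : HasDerivAt (fun w : ℂ => -Complex.exp (-t * w) * ((w - x) / t + 1 / t ^ 2))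
        (((u : ℂ) - x) * Complex.exp (-t * u)) (u : ℝ) := by
      have h1 := ((hexp (u : ℝ)).neg).mul
        ((((hasDerivAt_id ((u : ℝ) : ℂ)).sub_const (x : ℂ)).div_const t).add_const (1 / t ^ 2))
      refine h1.congr_deriv ?_
      simp only [id, Pi.neg_apply]
      field_simp
      ring
    exact hg.comp_ofReal
  have T1 : Tendsto (fun u : ℝ => Complex.exp (-t * u)) atTop (nhds 0) := by
    rw [tendsto_zero_iff_norm_tendsto_zero]
    simp only [bromwich_norm_exp]
    have := Real.tendsto_exp_atBot.comp (tendsto_id.const_mul_atTop_of_neg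
      (neg_neg_iff_pos.2 ht))
    refine this.congr fun u => ?_
    simp [neg_mul]
  have T2 : Tendsto (fun u : ℝ => (u : ℂ) * Complex.exp (-t * u)) atTop (nhds 0) := by
    refine squeeze_zero_norm' ?_ (bromwich_tendsto_mul_exp ht)
    filter_upwards [eventually_ge_atTop (0 : ℝ)] with u hu
    rw [norm_mul, bromwich_norm_exp, Complex.norm_real, Real.norm_eq_abs,
      abs_of_nonneg hu]
  have hFtend : Tendsto F atTop (nhds 0) := by
    have h := (T2.const_mul (-1 / t)).add (T1.const_mul ((x : ℂ) / t - 1 / t ^ 2))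
    rw [mul_zero, mul_zero, add_zero] at h
    refine h.congr fun u => ?_
    rw [hF]
    field_simp
    ring
  have hint : IntegrableOn (fun u : ℝ => ((u : ℂ) - x) * Complex.exp (-t * u)) (Ioi x) := by
    refine Integrable.mono' (bromwich_integrable_aux ht x)
      (Continuous.aestronglyMeasurable (by fun_prop)) ?_
    filter_upwards [ae_restrict_mem measurableSet_Ioi] with u hu
    rw [norm_mul, bromwich_norm_exp]
    have h9 : ‖(u : ℂ) - (x : ℂ)‖ = u - x := by
      rw [← Complex.ofReal_sub, Complex.norm_real, Real.norm_eq_abs,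
        abs_of_nonneg (by exact sub_nonneg.2 (le_of_lt hu))]
    rw [h9]
  have := integral_Ioi_of_hasDerivAt_of_tendsto
    (Continuous.continuousWithinAt (by fun_prop)) (fun u _ => hderiv u) hint hFtend
  rw [this, hF]
  simp only [Complex.ofReal_sub]
  field_simp
  ring

/-- Bromwich inversion formula for the expected shortfall:
`∫_x^∞ u f(u) du = x P(X > x) + (1/2π) ∫_ℝ M(a+is) e^{-(a+is)x}/(a+is)² ds`, and hence
`E[X | X > x] = x + (1/P(X > x)) (1/2π) ∫_ℝ M(a+is) e^{-(a+is)x}/(a+is)² ds`. -/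
theorem bromwich_expected_shortfall {Ω : Type*} [MeasurableSpace Ω] (ℙ : Measure Ω)
    [IsProbabilityMeasure ℙ] (X : Ω → ℝ) (hX : Measurable X)
    (f : ℝ → ℝ) (hf_nonneg : ∀ x, 0 ≤ f x) (hf_meas : Measurable f)
    (hlaw : ℙ.map X = volume.withDensity (fun x => ENNReal.ofReal (f x)))
    (a : ℝ) (ha : 0 < a) (M : ℂ → ℂ)
    (hM : ∀ t : ℂ, t.re = a → M t = ∫ x : ℝ, Complex.exp (t * x) * (f x : ℂ))
    (hInt_a : Integrable (fun x : ℝ => Real.exp (a * x) * f x))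
    (hM_int : Integrable (fun s : ℝ => M ((a : ℂ) + (s : ℂ) * Complex.I)))
    (hInv : ∀ u : ℝ, (f u : ℂ) = (1 / (2 * (Real.pi : ℂ))) *
      ∫ s : ℝ, M ((a : ℂ) + (s : ℂ) * Complex.I) *
        Complex.exp (-((a : ℂ) + (s : ℂ) * Complex.I) * (u : ℂ)))
    (x : ℝ) :
    ((∫ u in Ioi x, u * f u : ℝ) : ℂ)
      = (x : ℂ) * ((∫ u in Ioi x, f u : ℝ) : ℂ) + (1 / (2 * (Real.pi : ℂ))) *
          ∫ s : ℝ, M ((a : ℂ) + (s : ℂ) * Complex.I) *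
            Complex.exp (-((a : ℂ) + (s : ℂ) * Complex.I) * (x : ℂ))
              / ((a : ℂ) + (s : ℂ) * Complex.I) ^ 2 ∧
    (0 < ∫ u in Ioi x, f u →
      (((∫ u in Ioi x, f u)⁻¹ * ∫ u in Ioi x, u * f u : ℝ) : ℂ)
        = (x : ℂ) + ((∫ u in Ioi x, f u : ℝ) : ℂ)⁻¹ * ((1 / (2 * (Real.pi : ℂ))) *
            ∫ s : ℝ, M ((a : ℂ) + (s : ℂ) * Complex.I) *
              Complex.exp (-((a : ℂ) + (s : ℂ) * Complex.I) * (x : ℂ))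
                / ((a : ℂ) + (s : ℂ) * Complex.I) ^ 2)) := by
  have hTre : ∀ s : ℝ, ((a : ℂ) + (s : ℂ) * Complex.I).re = a := by
    intro s; simp
  have hTpos : ∀ s : ℝ, 0 < ((a : ℂ) + (s : ℂ) * Complex.I).re := fun s => by
    rw [hTre]; exact ha
  -- integrability of f on Ioi x
  have hfx : IntegrableOn f (Ioi x) := by
    refine Integrable.mono' ((hInt_a.const_mul (Real.exp (-(a * x)))).integrableOn)
      hf_meas.aestronglyMeasurable.restrict ?_
    filter_upwards [ae_restrict_mem measurableSet_Ioi] with u hu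
    rw [Real.norm_eq_abs, abs_of_nonneg (hf_nonneg u)]
    have h1 : (1 : ℝ) ≤ Real.exp (-(a * x)) * Real.exp (a * u) := by
      rw [← Real.exp_add]
      apply Real.one_le_exp
      have hxu : x < u := hu
      nlinarith
    calc f u = 1 * f u := (one_mul _).symm
      _ ≤ (Real.exp (-(a * x)) * Real.exp (a * u)) * f u :=
          mul_le_mul_of_nonneg_right h1 (hf_nonneg u)
      _ = Real.exp (-(a * x)) * (Real.exp (a * u) * f u) := by ring
  -- integrability of (u - x) * f u on Ioi x
  have hux : IntegrableOn (fun u => (u - x) * f u) (Ioi x) := by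
    refine Integrable.mono'
      ((hInt_a.const_mul (a⁻¹ * Real.exp (-(a * x)))).integrableOn)
      (((measurable_id.sub_const x).mul hf_meas).aestronglyMeasurable.restrict) ?_
    filter_upwards [ae_restrict_mem measurableSet_Ioi] with u hu
    have hxu : x < u := hu
    rw [Real.norm_eq_abs,
      abs_of_nonneg (mul_nonneg (by linarith) (hf_nonneg u))]
    have key : u - x ≤ a⁻¹ * (Real.exp (-(a * x)) * Real.exp (a * u)) := by
      rw [← Real.exp_add]
      have h3 : -(a * x) + a * u = a * (u - x) := by ring
      rw [h3]
      nlinarith [Real.add_one_le_exp (a * (u - x)), mul_inv_cancel₀ ha.ne',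
        inv_pos.2 ha]
    calc (u - x) * f u
        ≤ (a⁻¹ * (Real.exp (-(a * x)) * Real.exp (a * u))) * f u :=
          mul_le_mul_of_nonneg_right key (hf_nonneg u)
      _ = a⁻¹ * Real.exp (-(a * x)) * (Real.exp (a * u) * f u) := by ring
  -- split the integral
  have hsplit : (∫ u in Ioi x, u * f u) =
      (∫ u in Ioi x, (u - x) * f u) + x * ∫ u in Ioi x, f u := by
    calc ∫ u in Ioi x, u * f u
        = ∫ u in Ioi x, ((u - x) * f u + x * f u) := by
          apply integral_congr_ae; filter_upwards with u; ring
      _ = (∫ u in Ioi x, (u - x) * f u) + ∫ u in Ioi x, x * f u :=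
          integral_add hux (hfx.const_mul x)
      _ = (∫ u in Ioi x, (u - x) * f u) + x * ∫ u in Ioi x, f u := by
          rw [integral_const_mul]
  -- Fubini integrability
  have hswap_int : Integrable (Function.uncurry fun (u : ℝ) (s : ℝ) =>
      M ((a : ℂ) + (s : ℂ) * Complex.I) *
        Complex.exp (-((a : ℂ) + (s : ℂ) * Complex.I) * u) * ((u : ℂ) - x))
      ((volume.restrict (Ioi x)).prod volume) := by
    have habs : IntegrableOn (fun u : ℝ => |u - x| * Real.exp (-(a * u))) (Ioi x) := by
      refine (bromwich_integrable_aux ha x).congr ?_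
      filter_upwards [ae_restrict_mem measurableSet_Ioi] with u hu
      rw [abs_of_nonneg (sub_nonneg.2 (le_of_lt hu))]
    have hprod : Integrable (fun z : ℝ × ℝ =>
        (|z.1 - x| * Real.exp (-(a * z.1))) * ‖M ((a : ℂ) + (z.2 : ℂ) * Complex.I)‖)
        ((volume.restrict (Ioi x)).prod volume) := habs.mul_prod hM_int.norm
    refine hprod.mono' ?_ ?_
    · apply AEStronglyMeasurable.mul
      · apply AEStronglyMeasurable.mul
        · exact hM_int.aestronglyMeasurable.comp_snd
        · exact Continuous.aestronglyMeasurable (by fun_prop)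
      · exact Continuous.aestronglyMeasurable (by fun_prop)
    · refine ae_of_all _ fun z => ?_
      have h4 : ‖(z.1 : ℂ) - (x : ℂ)‖ = |z.1 - x| := by
        rw [← Complex.ofReal_sub, Complex.norm_real, Real.norm_eq_abs]
      rw [Function.uncurry, norm_mul, norm_mul, bromwich_norm_exp, hTre, h4]
      calc ‖M ((a : ℂ) + (z.2 : ℂ) * Complex.I)‖ * Real.exp (-(a * z.1)) * |z.1 - x|
          = (|z.1 - x| * Real.exp (-(a * z.1))) *
              ‖M ((a : ℂ) + (z.2 : ℂ) * Complex.I)‖ := by ring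
        _ ≤ _ := le_refl _
  -- main analytic identity
  have key : ((∫ u in Ioi x, (u - x) * f u : ℝ) : ℂ)
      = (1 / (2 * (Real.pi : ℂ))) *
          ∫ s : ℝ, M ((a : ℂ) + (s : ℂ) * Complex.I) *
            Complex.exp (-((a : ℂ) + (s : ℂ) * Complex.I) * (x : ℂ))
              / ((a : ℂ) + (s : ℂ) * Complex.I) ^ 2 := by
    have step1 : ((∫ u in Ioi x, (u - x) * f u : ℝ) : ℂ)
        = ∫ u in Ioi x, (((u : ℂ) - x) * (f u : ℂ)) := by
      calc ((∫ u in Ioi x, (u - x) * f u : ℝ) : ℂ)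
          = ∫ u in Ioi x, (((u - x) * f u : ℝ) : ℂ) := (integral_ofReal).symm
        _ = ∫ u in Ioi x, ((u : ℂ) - x) * (f u : ℂ) := by
            apply integral_congr_ae; filter_upwards with u; push_cast; ring
    rw [step1]
    have step2 : ∀ u : ℝ, ((u : ℂ) - x) * (f u : ℂ)
        = (1 / (2 * (Real.pi : ℂ))) *
            ∫ s : ℝ, M ((a : ℂ) + (s : ℂ) * Complex.I) *
              Complex.exp (-((a : ℂ) + (s : ℂ) * Complex.I) * u) * ((u : ℂ) - x) := by
      intro u
      rw [hInv u, integral_mul_const]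
      ring
    rw [integral_congr_ae (ae_of_all _ step2), integral_const_mul]
    congr 1
    rw [integral_integral_swap hswap_int]
    apply integral_congr_ae; filter_upwards with s
    calc ∫ u in Ioi x, M ((a : ℂ) + (s : ℂ) * Complex.I) *
          Complex.exp (-((a : ℂ) + (s : ℂ) * Complex.I) * u) * ((u : ℂ) - x)
        = ∫ u in Ioi x, M ((a : ℂ) + (s : ℂ) * Complex.I) *
            (((u : ℂ) - x) * Complex.exp (-((a : ℂ) + (s : ℂ) * Complex.I) * u)) := by
          apply integral_congr_ae; filter_upwards with u; ring
      _ = M ((a : ℂ) + (s : ℂ) * Complex.I) *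
            ∫ u in Ioi x, ((u : ℂ) - x) *
              Complex.exp (-((a : ℂ) + (s : ℂ) * Complex.I) * u) :=
          integral_const_mul _ _
      _ = M ((a : ℂ) + (s : ℂ) * Complex.I) *
            (Complex.exp (-((a : ℂ) + (s : ℂ) * Complex.I) * x) /
              ((a : ℂ) + (s : ℂ) * Complex.I) ^ 2) := by
          rw [bromwich_inner_int (hTpos s) x]
      _ = _ := (mul_div_assoc _ _ _).symm
  have hmain1 : ((∫ u in Ioi x, u * f u : ℝ) : ℂ)
      = (x : ℂ) * ((∫ u in Ioi x, f u : ℝ) : ℂ) + (1 / (2 * (Real.pi : ℂ))) *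
          ∫ s : ℝ, M ((a : ℂ) + (s : ℂ) * Complex.I) *
            Complex.exp (-((a : ℂ) + (s : ℂ) * Complex.I) * (x : ℂ))
              / ((a : ℂ) + (s : ℂ) * Complex.I) ^ 2 := by
    rw [hsplit]
    push_cast
    rw [key]
    ring
  refine ⟨hmain1, fun hpos => ?_⟩
  have hBne : ((∫ u in Ioi x, f u : ℝ) : ℂ) ≠ 0 := Complex.ofReal_ne_zero.2 hpos.ne'
  have hπ : (2 * (Real.pi : ℂ)) ≠ 0 := by
    simp [Real.pi_ne_zero]
  push_cast
  rw [hmain1]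
  generalize (∫ s : ℝ, M ((a : ℂ) + (s : ℂ) * Complex.I) *
    Complex.exp (-((a : ℂ) + (s : ℂ) * Complex.I) * (x : ℂ)) /
      ((a : ℂ) + (s : ℂ) * Complex.I) ^ 2) = J
  field_simp
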